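/- Given a monoid (W, ε, ·) acting on a set I via a monoid homomorphism ▶ into endofunctions of I, the indexed writer container with shapes S i := W and positions P i w j := (w ▶ i = j) carries an ICMS with e i := ε, w • w' := w · (w' (w ▶ i) refl) — where w' : ∀ j, (w ▶ i = j) → W — and with Pe≡ given by the preservation of ε by ▶, ↑ p := w ▶ i, ↖ p := refl, and ↗ given by preservation of · by ▶; the ICMS equations follow from the monoid axioms of W and the action laws. -/

import Mathlib

/-- An `I`-indexed container `S ◁ P`. -/
structure ICont (I : Type) where
  S : I → Type
  P : (i : I) → S i → I → Type

variable {I : Type}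

/-- The extent `⟦S ◁ P⟧ X i := Σ s : S i, ∀ j, P i s j → X j`. -/
def IExt (C : ICont I) (X : I → Type) (i : I) : Type :=
  Σ s : C.S i, ∀ j, C.P i s j → X j

/-- Functorial action of the extent on maps of families. -/
def iExtMap (C : ICont I) {X Y : I → Type} (h : ∀ i, X i → Y i) (i : I) :
    IExt C X i → IExt C Y i :=
  fun x => ⟨x.1, fun j p => h j (x.2 j p)⟩

/-- A morphism of indexed containers, in its `(σ, π)` form. -/
structure ICHom (C D : ICont I) where
  σ : ∀ i, C.S i → D.S i
  π : ∀ (i : I) (s : C.S i) (j : I), D.P i (σ i s) j → C.P i s j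

/-- The natural transformation `⟦f⟧` induced by a container morphism. -/
def ICHom.extNat {C D : ICont I} (f : ICHom C D) (X : I → Type) (i : I) :
    IExt C X i → IExt D X i :=
  fun x => ⟨f.σ i x.1, fun j p' => x.2 j (f.π i x.1 j p')⟩

/-- The identity container morphism. -/
def ICHom.id (C : ICont I) : ICHom C C :=
  ⟨fun _ s => s, fun _ _ _ p => p⟩

/-- Composition of container morphisms (diagrammatic order). -/
def ICHom.comp {C D E : ICont I} (f : ICHom C D) (g : ICHom D E) : ICHom C E :=
  ⟨fun i s => g.σ i (f.σ i s), fun i s j p => f.π i s j (g.π i (f.σ i s) j p)⟩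

/-- The identity container: shapes `Unit`, positions at `(i, ⋆, j)` given by `i = j`. -/
def idC (I : Type) : ICont I :=
  ⟨fun _ => Unit, fun i _ j => PLift (i = j)⟩

/-- The composite (tensorIC) container. -/
def tensorIC (C D : ICont I) : ICont I :=
  ⟨fun i => IExt C D.S i,
   fun i ss k => Σ j : I, Σ p : C.P i ss.1 j, D.P j (ss.2 j p) k⟩

/-- The data of an indexed container monoid structure (ICMS). -/
structure ICMSData {I : Type} (C : ICont I) where
  e : ∀ i, C.S i
  mul : ∀ (i : I) (s : C.S i), (∀ j, C.P i s j → C.S j) → C.S i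
  Pe : ∀ (i j : I), C.P i (e i) j → i = j
  up : ∀ (i : I) (s : C.S i) (s' : ∀ j, C.P i s j → C.S j) (j : I),
    C.P i (mul i s s') j → I
  ul : ∀ (i : I) (s : C.S i) (s' : ∀ j, C.P i s j → C.S j) (j : I)
    (p : C.P i (mul i s s') j), C.P i s (up i s s' j p)
  ur : ∀ (i : I) (s : C.S i) (s' : ∀ j, C.P i s j → C.S j) (j : I)
    (p : C.P i (mul i s s') j),
    C.P (up i s s' j p) (s' (up i s s' j p) (ul i s s' j p)) j

namespace ICMSData

variable {I : Type} {C : ICont I} (D : ICMSData C)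

/-- The constant-unit family `e^P`. -/
def eP {i : I} (s : C.S i) : ∀ j, C.P i s j → C.S j := fun j _ => D.e j

/-- The constant family `s̄` over unit positions (transported along `Pe`). -/
def sbar {i : I} (s : C.S i) : ∀ j, C.P i (D.e i) j → C.S j :=
  fun j p => D.Pe i j p ▸ s

/-- Pointwise multiplication `s' •^P s''`. -/
def mulP {i : I} (s : C.S i) (s' : ∀ j, C.P i s j → C.S j)
    (s'' : ∀ (k : I) (q : C.P i s k) (l : I), C.P k (s' k q) l → C.S l) :
    ∀ k, C.P i s k → C.S k :=
  fun k q => D.mul k (s' k q) (s'' k q)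

/-- The reassociated family `⟨s''⟩`. -/
def smoosh {i : I} (s : C.S i) (s' : ∀ j, C.P i s j → C.S j)
    (s'' : ∀ (k : I) (q : C.P i s k) (l : I), C.P k (s' k q) l → C.S l) :
    ∀ l, C.P i (D.mul i s s') l → C.S l :=
  fun l r => s'' (D.up i s s' l r) (D.ul i s s' l r) l (D.ur i s s' l r)

end ICMSData

/-- The equations of an indexed container monoid structure. Some of the equations
are heterogeneous; they are stated using `HEq`, quantifying over a transported
position `p₂` heterogeneously equal to `p`. -/
structure ICMSLaws {I : Type} (C : ICont I) (D : ICMSData C) : Prop where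
  e_unit_l : ∀ (i : I) (s : C.S i), D.mul i s (D.eP s) = s
  ul_unit_l : ∀ (i : I) (s : C.S i) (j : I) (p : C.P i (D.mul i s (D.eP s)) j),
    HEq (D.ul i s (D.eP s) j p) p
  e_unit_r : ∀ (i : I) (s : C.S i), D.mul i (D.e i) (D.sbar s) = s
  ur_unit_r : ∀ (i : I) (s : C.S i) (j : I)
    (p : C.P i (D.mul i (D.e i) (D.sbar s)) j),
    HEq (D.ur i (D.e i) (D.sbar s) j p) p
  mul_assoc : ∀ (i : I) (s : C.S i) (s' : ∀ j, C.P i s j → C.S j)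
    (s'' : ∀ (k : I) (q : C.P i s k) (l : I), C.P k (s' k q) l → C.S l),
    D.mul i (D.mul i s s') (D.smoosh s s' s'') = D.mul i s (D.mulP s s' s'')
  up_assoc : ∀ (i : I) (s : C.S i) (s' : ∀ j, C.P i s j → C.S j)
    (s'' : ∀ (k : I) (q : C.P i s k) (l : I), C.P k (s' k q) l → C.S l) (j : I)
    (p : C.P i (D.mul i (D.mul i s s') (D.smoosh s s' s'')) j)
    (p₂ : C.P i (D.mul i s (D.mulP s s' s'')) j), HEq p p₂ →
    D.up i (D.mul i s s') (D.smoosh s s' s'') j p =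
      D.up (D.up i s (D.mulP s s' s'') j p₂)
        (s' (D.up i s (D.mulP s s' s'') j p₂) (D.ul i s (D.mulP s s' s'') j p₂))
        (s'' (D.up i s (D.mulP s s' s'') j p₂) (D.ul i s (D.mulP s s' s'') j p₂)) j
        (D.ur i s (D.mulP s s' s'') j p₂)
  ulup_up_assoc : ∀ (i : I) (s : C.S i) (s' : ∀ j, C.P i s j → C.S j)
    (s'' : ∀ (k : I) (q : C.P i s k) (l : I), C.P k (s' k q) l → C.S l) (j : I)
    (p : C.P i (D.mul i (D.mul i s s') (D.smoosh s s' s'')) j)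
    (p₂ : C.P i (D.mul i s (D.mulP s s' s'')) j), HEq p p₂ →
    D.up i s s' (D.up i (D.mul i s s') (D.smoosh s s' s'') j p)
        (D.ul i (D.mul i s s') (D.smoosh s s' s'') j p) =
      D.up i s (D.mulP s s' s'') j p₂
  ulul_ul_assoc : ∀ (i : I) (s : C.S i) (s' : ∀ j, C.P i s j → C.S j)
    (s'' : ∀ (k : I) (q : C.P i s k) (l : I), C.P k (s' k q) l → C.S l) (j : I)
    (p : C.P i (D.mul i (D.mul i s s') (D.smoosh s s' s'')) j)
    (p₂ : C.P i (D.mul i s (D.mulP s s' s'')) j), HEq p p₂ →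
    HEq (D.ul i s s' (D.up i (D.mul i s s') (D.smoosh s s' s'') j p)
          (D.ul i (D.mul i s s') (D.smoosh s s' s'') j p))
        (D.ul i s (D.mulP s s' s'') j p₂)
  ulur_urul_assoc : ∀ (i : I) (s : C.S i) (s' : ∀ j, C.P i s j → C.S j)
    (s'' : ∀ (k : I) (q : C.P i s k) (l : I), C.P k (s' k q) l → C.S l) (j : I)
    (p : C.P i (D.mul i (D.mul i s s') (D.smoosh s s' s'')) j)
    (p₂ : C.P i (D.mul i s (D.mulP s s' s'')) j), HEq p p₂ →
    HEq (D.ur i s s' (D.up i (D.mul i s s') (D.smoosh s s' s'') j p)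
          (D.ul i (D.mul i s s') (D.smoosh s s' s'') j p))
        (D.ul (D.up i s (D.mulP s s' s'') j p₂)
          (s' (D.up i s (D.mulP s s' s'') j p₂) (D.ul i s (D.mulP s s' s'') j p₂))
          (s'' (D.up i s (D.mulP s s' s'') j p₂) (D.ul i s (D.mulP s s' s'') j p₂)) j
          (D.ur i s (D.mulP s s' s'') j p₂))
  ur_urur_assoc : ∀ (i : I) (s : C.S i) (s' : ∀ j, C.P i s j → C.S j)
    (s'' : ∀ (k : I) (q : C.P i s k) (l : I), C.P k (s' k q) l → C.S l) (j : I)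
    (p : C.P i (D.mul i (D.mul i s s') (D.smoosh s s' s'')) j)
    (p₂ : C.P i (D.mul i s (D.mulP s s' s'')) j), HEq p p₂ →
    HEq (D.ur i (D.mul i s s') (D.smoosh s s' s'') j p)
        (D.ur (D.up i s (D.mulP s s' s'') j p₂)
          (s' (D.up i s (D.mulP s s' s'') j p₂) (D.ul i s (D.mulP s s' s'') j p₂))
          (s'' (D.up i s (D.mulP s s' s'') j p₂) (D.ul i s (D.mulP s s' s'') j p₂)) j
          (D.ur i s (D.mulP s s' s'') j p₂))

/-- An indexed container monoid structure: data together with the laws. -/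
structure ICMS {I : Type} (C : ICont I) where
  data : ICMSData C
  laws : ICMSLaws C data

/-- The indexed writer container for a monoid `W` acting on `I`:
shapes `S i := W`, positions `P i w j := (w ▶ i = j)`. -/
def writerCont {I : Type} (W : Type) (act : W → I → I) : ICont I :=
  ⟨fun _ => W, fun i w j => PLift (act w i = j)⟩

/-- The ICMS data on the indexed writer container, for a monoid `W` acting on `I`
via a monoid homomorphism into endofunctions of `I`. -/
def writerData {I : Type} (W : Type) [Monoid W] (act : W → I → I)
    (h1 : ∀ i, act 1 i = i)
    (hmul : ∀ (w w' : W) (i : I), act (w * w') i = act w' (act w i)) :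
    ICMSData (writerCont W act) where
  e _ := (1 : W)
  mul i w w' := (show W from w) * (show W from w' (act w i) ⟨rfl⟩)
  Pe i _j p := (h1 i).symm.trans p.down
  up i w _w' _j _p := act w i
  ul _i _w _w' _j _p := ⟨rfl⟩
  ur i w w' _j p := ⟨(hmul w (w' (act w i) ⟨rfl⟩) i).symm.trans p.down⟩

/-- the indexed writer container carries an ICMS whose equations
follow from the monoid axioms of `W` and the action laws. -/
lemma plift_heq {p q : Prop} (a : PLift p) (b : PLift q) : HEq a b := by
  have h : p = q := propext ⟨fun _ => b.down, fun _ => a.down⟩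
  subst h
  cases a; cases b; rfl

theorem writer_icms {I : Type} (W : Type) [Monoid W] (act : W → I → I)
    (h1 : ∀ i, act 1 i = i)
    (hmul : ∀ (w w' : W) (i : I), act (w * w') i = act w' (act w i)) :
    ICMSLaws (writerCont W act) (writerData W act h1 hmul) := by
  have key : ∀ {j k : I} (h : j = k) (w : W),
      (show (writerCont W act).S k from h ▸ w) = w := by
    intro j k h w; cases h; rfl
  have appP : ∀ {a : I} (f : ∀ l, PLift (a = l) → W) {l l' : I},
      l = l' → ∀ (p : PLift (a = l)) (p' : PLift (a = l')), f l p = f l' p' := by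
    intro a f l l' h p p'
    subst h; cases p; cases p'; rfl
  constructor
  · intro i s; exact mul_one (show W from s)
  · intro i s j p; exact plift_heq _ _
  · intro i s
    show (1 : W) * (show W from _) = (show W from s)
    rw [one_mul]; exact key _ s
  · intro i s j p; exact plift_heq _ _
  · intro i s s' s''
    show ((show W from s) * (show W from s' (act s i) ⟨rfl⟩)) * (show W from _)
        = (show W from s) * ((show W from s' (act s i) ⟨rfl⟩) * (show W from _))
    rw [mul_assoc]
    congr 1
    congr 1
    exact appP (fun l r => show W from s'' (act s i) ⟨rfl⟩ l r)
      (hmul s (s' (act s i) ⟨rfl⟩) i) _ _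
  · intro i s s' s'' j p p₂ hp
    exact hmul s (s' (act s i) ⟨rfl⟩) i
  · intro i s s' s'' j p p₂ hp; rfl
  · intro i s s' s'' j p p₂ hp; exact plift_heq _ _
  · intro i s s' s'' j p p₂ hp; exact plift_heq _ _
  · intro i s s' s'' j p p₂ hp; exact plift_heq _ _
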